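/- (Fully standard vanishing characterization.) Assume the kinetics κ is fully standard and U-linear, let σ ∈ Δ be a cycle of G_U all of whose edge labels are positive at x (i.e., supp(y_{r̃_σ}) ⊆ supp(x)). Then Π(σ)(x) = Σ_{γ∈Γ(σ)} π(γ)(x) = 0 if and only if φ_j(x) = 0 for every j such that U_j is a node of σ, where φ_j(x) = q_{H(j)}(x) Σ_{τ∈Θ(U_j)} π(τ)(x). -/

import Mathlib

/-- A multidigraph: a set of nodes `V`, a set of edges `E`, and source/target maps. -/
structure Multidigraph (V E : Type*) where
  src : E → V
  tgt : E → V

namespace Multidigraph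

variable {V E : Type*}

/-- One-step edge relation using only the edges in `τ`. -/
def Rel (G : Multidigraph V E) (τ : Set E) (a b : V) : Prop :=
  ∃ e ∈ τ, G.src e = a ∧ G.tgt e = b

/-- Undirected (symmetrized) one-step relation. -/
def URel (G : Multidigraph V E) (a b : V) : Prop :=
  G.Rel Set.univ a b ∨ G.Rel Set.univ b a

/-- Node set of the (weakly) connected component containing `v`. -/
def component (G : Multidigraph V E) (v : V) : Set V :=
  {w | Relation.ReflTransGen G.URel v w}

/-- `τ` is a spanning tree of the subgraph of `G` induced on the node set `W`,
rooted at `r`: all edges stay inside `W`, every non-root node of `W` has exactly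
one outgoing edge in `τ`, the root has none, and every node of `W` reaches `r`
through `τ`. -/
def IsSpanningTreeOn (G : Multidigraph V E) (W : Set V) (τ : Finset E) (r : V) : Prop :=
  (∀ e ∈ τ, G.src e ∈ W ∧ G.tgt e ∈ W) ∧
  (∀ v ∈ W, v ≠ r → ∃! e, e ∈ τ ∧ G.src e = v) ∧
  (∀ e ∈ τ, G.src e ≠ r) ∧
  (∀ v ∈ W, Relation.ReflTransGen (G.Rel (τ : Set E)) v r)

/-- Spanning tree of `G` rooted at `r`. -/
def IsSpanningTree (G : Multidigraph V E) (τ : Finset E) (r : V) : Prop :=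
  G.IsSpanningTreeOn Set.univ τ r

/-- A cycle: a nonempty closed directed path with pairwise distinct nodes. -/
def IsCycle (G : Multidigraph V E) (l : List E) : Prop :=
  l ≠ [] ∧ (l.map G.src).Nodup ∧
  l.Chain' (fun a b => G.tgt a = G.src b) ∧
  ∀ h : l ≠ [], G.tgt (l.getLast h) = G.src (l.head h)

def StronglyConnected (G : Multidigraph V E) : Prop :=
  ∀ a b : V, Relation.ReflTransGen (G.Rel Set.univ) a b

def Connected (G : Multidigraph V E) : Prop :=
  ∀ a b : V, Relation.ReflTransGen G.URel a b

/-- Incidence matrix of a multidigraph. -/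
def incidence [DecidableEq V] (G : Multidigraph V E) : Matrix V E ℝ := fun v e =>
  if G.tgt e = v ∧ G.src e ≠ v then 1
  else if G.src e = v ∧ G.tgt e ≠ v then (-1 : ℝ) else 0

section Aux
open scoped Classical

lemma rel_mono (G : Multidigraph V E) {S T : Set E} (h : S ⊆ T) {a b : V}
    (hab : G.Rel S a b) : G.Rel T a b := by
  obtain ⟨e, he, h1, h2⟩ := hab; exact ⟨e, h he, h1, h2⟩

lemma reach_mono (G : Multidigraph V E) {S T : Set E} (h : S ⊆ T) {a b : V}
    (hab : Relation.ReflTransGen (G.Rel S) a b) :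
    Relation.ReflTransGen (G.Rel T) a b :=
  Relation.ReflTransGen.mono (fun _ _ hr => G.rel_mono h hr) _ _ hab

lemma chain_reach_src (G : Multidigraph V E) :
    ∀ (L : List E) (a : E), (a :: L).Chain' (fun x y => G.tgt x = G.src y) →
      ∀ e ∈ a :: L, Relation.ReflTransGen (G.Rel {f | f ∈ a :: L}) (G.src a) (G.src e)
  | [], a, _, e, he => by
      simp only [List.mem_singleton] at he; subst he; exact .refl
  | b :: L, a, hch, e, he => by
      rcases List.mem_cons.1 he with rfl | he'
      · exact .refl
      · have hstep : G.Rel {f | f ∈ a :: b :: L} (G.src a) (G.src b) :=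
          ⟨a, by simp, rfl, (List.isChain_cons_cons.1 hch).1⟩
        have ih := chain_reach_src G L b (List.isChain_cons_cons.1 hch).2 e he'
        exact Relation.ReflTransGen.head hstep
          (G.reach_mono (fun f hf => List.mem_cons_of_mem a hf) ih)

lemma chain_reach_last (G : Multidigraph V E) :
    ∀ (L : List E) (a : E), (a :: L).Chain' (fun x y => G.tgt x = G.src y) →
      ∀ e ∈ a :: L, Relation.ReflTransGen (G.Rel {f | f ∈ a :: L}) (G.src e)
        (G.tgt ((a :: L).getLast (List.cons_ne_nil a L)))
  | [], a, _, e, he => by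
      simp only [List.mem_singleton] at he; subst he
      exact Relation.ReflTransGen.single ⟨e, by simp, rfl, by simp⟩
  | b :: L, a, hch, e, he => by
      have hsub : {f | f ∈ b :: L} ⊆ {f | f ∈ a :: b :: L} :=
        fun f hf => List.mem_cons_of_mem a hf
      have hlast : ((a :: b :: L).getLast (List.cons_ne_nil a (b :: L)))
          = ((b :: L).getLast (List.cons_ne_nil b L)) := List.getLast_cons _
      rw [hlast]
      rcases List.mem_cons.1 he with rfl | he'
      · have hstep : G.Rel {f | f ∈ e :: b :: L} (G.src e) (G.src b) :=
          ⟨e, by simp, rfl, (List.isChain_cons_cons.1 hch).1⟩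
        have ih := chain_reach_last G L b (List.isChain_cons_cons.1 hch).2 b (by simp)
        exact Relation.ReflTransGen.head hstep (G.reach_mono hsub ih)
      · exact G.reach_mono hsub (chain_reach_last G L b (List.isChain_cons_cons.1 hch).2 e he')

lemma reach_avoid (G : Multidigraph V E) (S : Set E) (j : V) {a : V}
    (h : Relation.ReflTransGen (G.Rel S) a j) :
    Relation.ReflTransGen (G.Rel {f | f ∈ S ∧ G.src f ≠ j}) a j := by
  induction h using Relation.ReflTransGen.head_induction_on with
  | refl => exact .refl
  | head hab _ ih =>
      rename_i a' b' _
      by_cases haj : a' = j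
      · subst haj; exact .refl
      · obtain ⟨f, hf, h1, h2⟩ := hab
        exact Relation.ReflTransGen.head ⟨f, ⟨hf, by rw [h1]; exact haj⟩, h1, h2⟩ ih


lemma chain_reach_src' (G : Multidigraph V E) (L : List E) (hL : L ≠ [])
    (hch : L.Chain' (fun x y => G.tgt x = G.src y)) (e : E) (he : e ∈ L) :
    Relation.ReflTransGen (G.Rel {f | f ∈ L}) (G.src (L.head hL)) (G.src e) := by
  cases L with
  | nil => exact absurd rfl hL
  | cons a L => exact G.chain_reach_src L a hch e he

lemma chain_reach_last' (G : Multidigraph V E) (L : List E) (hL : L ≠ [])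
    (hch : L.Chain' (fun x y => G.tgt x = G.src y)) (e : E) (he : e ∈ L) :
    Relation.ReflTransGen (G.Rel {f | f ∈ L}) (G.src e) (G.tgt (L.getLast hL)) := by
  cases L with
  | nil => exact absurd rfl hL
  | cons a L => exact G.chain_reach_last L a hch e he

open scoped Classical in
lemma hat_tree (G : Multidigraph V E)
    (σ : List E) (hσ : G.IsCycle σ) (W : Set V)
    (hW : W = G.component (G.src (σ.head hσ.1)))
    (e : E) (he : e ∈ σ) (τ : Finset E) (hτ : G.IsSpanningTreeOn W τ (G.src e)) :
    ∃ θ : Finset E, G.IsSpanningTreeOn W θ (G.src e) ∧ (∀ f ∈ σ, f ≠ e → f ∈ θ) ∧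
      ∀ f ∈ θ, f ∈ τ ∨ f ∈ σ := by
  obtain ⟨hne, hnd, hch, hwrap⟩ := hσ
  set j := G.src e with hj
  -- injectivity of src on σ
  have hinj : ∀ f ∈ σ, ∀ g ∈ σ, G.src f = G.src g → f = g :=
    List.inj_on_of_nodup_map hnd
  -- reachability along σ
  have hreach_src : ∀ f ∈ σ, Relation.ReflTransGen (G.Rel {g | g ∈ σ})
      (G.src (σ.head hne)) (G.src f) := fun f hf => G.chain_reach_src' σ hne hch f hf
  have hreach_last : ∀ f ∈ σ, Relation.ReflTransGen (G.Rel {g | g ∈ σ})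
      (G.src f) (G.tgt (σ.getLast hne)) := fun f hf => G.chain_reach_last' σ hne hch f hf
  -- sources of σ lie in W
  have hsrcW : ∀ f ∈ σ, G.src f ∈ W := by
    intro f hf
    rw [hW]
    have := hreach_src f hf
    exact Relation.ReflTransGen.mono
      (fun x y hxy => Or.inl (G.rel_mono (Set.subset_univ _) hxy)) _ _ this
  -- targets of σ are sources of σ
  have hnext : ∀ f ∈ σ, ∃ g ∈ σ, G.tgt f = G.src g := by
    intro f hf
    obtain ⟨⟨i, hi⟩, rfl⟩ := List.mem_iff_get.1 hf
    by_cases h1 : i + 1 < σ.length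
    · exact ⟨σ.get ⟨i + 1, h1⟩, List.get_mem _ _,
        List.isChain_iff_getElem.1 hch i (by omega)⟩
    · have : i = σ.length - 1 := by omega
      subst this
      have hlast : σ.get ⟨σ.length - 1, hi⟩ = σ.getLast hne := by
        rw [List.getLast_eq_getElem]; simp
      refine ⟨σ.head hne, List.head_mem hne, ?_⟩
      rw [hlast]; exact hwrap hne
  have htgtW : ∀ f ∈ σ, G.tgt f ∈ W := by
    intro f hf
    obtain ⟨g, hg, hfg⟩ := hnext f hf
    rw [hfg]; exact hsrcW g hg
  -- nodes of σ
  set N : V → Prop := fun v => ∃ g ∈ σ, G.src g = v with hN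
  -- the modified tree
  set θ : Finset E := τ.filter (fun f => ¬ N (G.src f)) ∪
    σ.toFinset.filter (fun f => G.src f ≠ j) with hθ
  have memθ : ∀ f, f ∈ θ ↔ (f ∈ τ ∧ ¬ N (G.src f)) ∨ (f ∈ σ ∧ G.src f ≠ j) := by
    intro f
    simp [hθ, Finset.mem_union, Finset.mem_filter, List.mem_toFinset]
  -- every node of σ reaches j through θ
  have hNθ : ∀ v, N v → Relation.ReflTransGen (G.Rel (θ : Set E)) v j := by
    intro v hv
    obtain ⟨g, hg, rfl⟩ := hv
    have p1 := hreach_last g hg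
    have p2 := hreach_src e he
    have hw : G.tgt (σ.getLast hne) = G.src (σ.head hne) := hwrap hne
    have pσ : Relation.ReflTransGen (G.Rel {f | f ∈ σ}) (G.src g) j :=
      p1.trans (hw ▸ p2)
    have pav := G.reach_avoid {f | f ∈ σ} j pσ
    refine G.reach_mono ?_ pav
    intro f hf
    exact (memθ f).2 (Or.inr hf)
  refine ⟨θ, ⟨?_, ?_, ?_, ?_⟩, ?_, ?_⟩
  · -- edges in W
    intro f hf
    rcases (memθ f).1 hf with ⟨hfτ, _⟩ | ⟨hfσ, _⟩
    · exact hτ.1 f hfτ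
    · exact ⟨hsrcW f hfσ, htgtW f hfσ⟩
  · -- unique outgoing edge
    intro v hvW hvj
    by_cases hvN : N v
    · obtain ⟨g, hg, hgv⟩ := hvN
      refine ⟨g, ⟨(memθ g).2 (Or.inr ⟨hg, by rw [hgv]; exact hvj⟩), hgv⟩, ?_⟩
      rintro f ⟨hfθ, hfv⟩
      rcases (memθ f).1 hfθ with ⟨_, hfn⟩ | ⟨hfσ, _⟩
      · exact absurd ⟨g, hg, by rw [hgv, hfv]⟩ hfn
      · exact hinj f hfσ g hg (by rw [hfv, hgv])
    · obtain ⟨t, ⟨htτ, htv⟩, hut⟩ := hτ.2.1 v hvW hvj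
      refine ⟨t, ⟨(memθ t).2 (Or.inl ⟨htτ, by rw [htv]; exact hvN⟩), htv⟩, ?_⟩
      rintro f ⟨hfθ, hfv⟩
      rcases (memθ f).1 hfθ with ⟨hfτ, _⟩ | ⟨hfσ, _⟩
      · exact hut f ⟨hfτ, hfv⟩
      · exact absurd ⟨f, hfσ, hfv⟩ hvN
  · -- no edge leaves the root
    intro f hf
    rcases (memθ f).1 hf with ⟨hfτ, _⟩ | ⟨_, hfj⟩
    · exact hτ.2.2.1 f hfτ
    · exact hfj
  · -- reachability
    have hlift : ∀ v, Relation.ReflTransGen (G.Rel (τ : Set E)) v j →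
        Relation.ReflTransGen (G.Rel (θ : Set E)) v j := by
      intro v hp
      induction hp using Relation.ReflTransGen.head_induction_on with
      | refl => exact .refl
      | head hab hbp ih =>
          rename_i a b
          by_cases haN : N a
          · exact hNθ a haN
          · obtain ⟨f, hfτ, h1, h2⟩ := hab
            have hfθ : f ∈ θ := (memθ f).2 (Or.inl ⟨hfτ, by rw [h1]; exact haN⟩)
            exact Relation.ReflTransGen.head ⟨f, hfθ, h1, h2⟩ ih
    exact fun v hvW => hlift v (hτ.2.2.2 v hvW)
  · -- contains σ \ {e}
    intro f hfσ hfe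
    refine (memθ f).2 (Or.inr ⟨hfσ, fun hsrc => hfe (hinj f hfσ e he hsrc)⟩)
  · -- θ ⊆ τ ∪ σ
    intro f hf
    rcases (memθ f).1 hf with ⟨hfτ, _⟩ | ⟨hfσ, _⟩
    · exact Or.inl hfτ
    · exact Or.inr hfσ


end Aux

end Multidigraph

open scoped Classical

/-- Fully standard vanishing characterization: for a cycle `σ`
of the labeled multidigraph `G_U` with nonnegative labels that are positive
along `σ`, `Π(σ) = 0` if and only if `φ_j = 0` for every node `j` of `σ`,
where `φ_j = q_j · Σ_{τ ∈ Θ(j)} π(τ)` and `q_j > 0`. -/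
theorem stmt18 {V E : Type} [Fintype V] [Fintype E] (G : Multidigraph V E)
    (ℓ : E → ℝ) (hℓ : ∀ e, 0 ≤ ℓ e)
    (σ : List E) (hσ : G.IsCycle σ)
    (hpos : ∀ e ∈ σ, 0 < ℓ e)
    (W : Set V) (hW : W = G.component (G.src (σ.head hσ.1)))
    (q : V → ℝ) (hq : ∀ j, 0 < q j) :
    ((∑ γ ∈ Finset.univ.filter (fun γ : Finset E =>
          ∃ e ∈ σ, ∃ τ : Finset E, G.IsSpanningTreeOn W τ (G.src e) ∧
            (∀ f ∈ σ, f ≠ e → f ∈ τ) ∧ γ = insert e τ),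
        ∏ f ∈ γ, ℓ f) = 0)
      ↔ (∀ j : V, (∃ e ∈ σ, G.src e = j) →
          q j * (∑ τ ∈ Finset.univ.filter
              (fun τ : Finset E => G.IsSpanningTreeOn W τ j),
            ∏ f ∈ τ, ℓ f) = 0) := by
  constructor
  · intro hP j hj
    obtain ⟨e, he, rfl⟩ := hj
    rw [mul_eq_zero]
    right
    refine Finset.sum_eq_zero ?_
    intro τ hτm
    have hsp : G.IsSpanningTreeOn W τ (G.src e) := (Finset.mem_filter.1 hτm).2
    obtain ⟨θ, hθ, hcont, hsub⟩ := G.hat_tree σ hσ W hW e he τ hsp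
    have hγ : (insert e θ) ∈ Finset.univ.filter (fun γ : Finset E =>
        ∃ e ∈ σ, ∃ τ : Finset E, G.IsSpanningTreeOn W τ (G.src e) ∧
          (∀ f ∈ σ, f ≠ e → f ∈ τ) ∧ γ = insert e τ) :=
      Finset.mem_filter.2 ⟨Finset.mem_univ _, e, he, θ, hθ, hcont, rfl⟩
    have hzero : (∏ f ∈ insert e θ, ℓ f) = 0 :=
      (Finset.sum_eq_zero_iff_of_nonneg
        (fun γ _ => Finset.prod_nonneg fun f _ => hℓ f)).1 hP _ hγ
    obtain ⟨f, hf, hf0⟩ := Finset.prod_eq_zero_iff.1 hzero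
    have hfθ : f ∈ θ := by
      rcases Finset.mem_insert.1 hf with rfl | h
      · exact absurd hf0 (hpos f he).ne'
      · exact h
    rcases hsub f hfθ with hfτ | hfσ
    · exact Finset.prod_eq_zero hfτ hf0
    · exact absurd hf0 (hpos f hfσ).ne'
  · intro h
    refine Finset.sum_eq_zero ?_
    intro γ hγ
    obtain ⟨-, e, he, τ, hτ, hcont, rfl⟩ := Finset.mem_filter.1 hγ
    have h0 := h (G.src e) ⟨e, he, rfl⟩
    have hS : (∑ τ ∈ Finset.univ.filter
        (fun τ : Finset E => G.IsSpanningTreeOn W τ (G.src e)), ∏ f ∈ τ, ℓ f) = 0 :=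
      (mul_eq_zero.1 h0).resolve_left (hq _).ne'
    have hterm : (∏ f ∈ τ, ℓ f) = 0 :=
      (Finset.sum_eq_zero_iff_of_nonneg
        (fun τ _ => Finset.prod_nonneg fun f _ => hℓ f)).1 hS τ
        (Finset.mem_filter.2 ⟨Finset.mem_univ _, hτ⟩)
    obtain ⟨f, hf, hf0⟩ := Finset.prod_eq_zero_iff.1 hterm
    exact Finset.prod_eq_zero (Finset.mem_insert_of_mem hf) hf0
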